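/- arXiv:1609.00476 — 2 statements merged into one kernel-verified Lean document; each statement's English description precedes it below -/
import Mathlib

section
/- The sequence csd(D_{2^n}), where D_{2^n} is the dihedral group of order 2^n, converges to 0 as n → ∞. -/
open Pointwise

/-- The cyclic subgroup commutativity degree of a group `G`: the proportion of
pairs of cyclic subgroups `(H, K)` of `G` with `HK = KH`. -/
noncomputable def csd (G : Type*) [Group G] : ℚ :=
  (Nat.card {pr : Subgroup G × Subgroup G //
      IsCyclic ↥pr.1 ∧ IsCyclic ↥pr.2 ∧
      (pr.1 : Set G) * (pr.2 : Set G) = (pr.2 : Set G) * (pr.1 : Set G)} : ℚ) /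
  (Nat.card {H : Subgroup G // IsCyclic ↥H} : ℚ) ^ 2

open Subgroup DihedralGroup

set_option linter.unusedSectionVars false

lemma isCyclic_zpowers {G : Type*} [Group G] (g : G) : IsCyclic (Subgroup.zpowers g) := by
  constructor
  refine ⟨⟨g, Subgroup.mem_zpowers g⟩, ?_⟩
  rintro ⟨y, k, rfl⟩
  exact ⟨k, Subtype.ext (by push_cast [SubgroupClass.coe_zpow]; rfl)⟩
lemma mem_zpowers_orderOf_two {G : Type*} [Group G] {g x : G} (h : orderOf g = 2) :
    x ∈ Subgroup.zpowers g ↔ x = 1 ∨ x = g := by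
  constructor
  · rintro ⟨z, rfl⟩
    simp only []
    rw [← zpow_mod_orderOf, h]
    rcases Int.emod_two_eq z with h2 | h2 <;>
      rw [show ((2:ℕ):ℤ) = (2:ℤ) by norm_num, h2] <;> simp
  · rintro (rfl | rfl)
    · exact one_mem _
    · exact Subgroup.mem_zpowers _


lemma eq_zpowers_pow_of_le_zpowers {G : Type*} [Group G] [Finite G] {g : G} {H : Subgroup G}
    (hle : H ≤ Subgroup.zpowers g) :
    H = Subgroup.zpowers (g ^ (orderOf g / Nat.card H)) := by
  set N := orderOf g with hN
  set d := Nat.card H with hd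
  have hd0 : 0 < d := Nat.card_pos
  have hN0 : 0 < N := orderOf_pos g
  have hdvd : d ∣ N := by
    simpa [Nat.card_zpowers] using Subgroup.card_dvd_of_le hle
  set e := N / d with he
  have he0 : e ≠ 0 := Nat.div_ne_zero_iff.mpr ⟨hd0.ne', Nat.le_of_dvd hN0 hdvd⟩
  have hord : orderOf (g ^ e) = d := by
    rw [orderOf_pow_of_dvd he0 (Nat.div_dvd_of_dvd hdvd), ← hN, Nat.div_div_self hdvd hN0.ne']
  have hle2 : H ≤ Subgroup.zpowers (g ^ e) := by
    intro x hx
    obtain ⟨z, hz⟩ := hle hx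
    simp only at hz
    have h1 : x ^ d = 1 := by
      have h2 := congrArg (Subtype.val) (pow_card_eq_one' (x := (⟨x, hx⟩ : H)))
      rwa [SubgroupClass.coe_pow, OneMemClass.coe_one] at h2
    have h2 : (N : ℤ) ∣ z * d := by
      rw [hN, orderOf_dvd_iff_zpow_eq_one, zpow_mul, zpow_natCast, hz]
      exact_mod_cast h1
    have h3 : (e : ℤ) ∣ z := by
      have hNe : (N : ℤ) = e * d := by exact_mod_cast (Nat.div_mul_cancel hdvd).symm
      rw [hNe] at h2
      exact (mul_dvd_mul_iff_right (by exact_mod_cast hd0.ne' : (d:ℤ) ≠ 0)).mp h2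
    obtain ⟨c, rfl⟩ := h3
    exact ⟨c, by show (g ^ e) ^ c = x; rw [← zpow_natCast g e, ← zpow_mul]; exact hz⟩
  refine Subgroup.eq_of_le_of_card_ge hle2 ?_
  rw [Nat.card_zpowers, hord]

lemma subgroup_eq_of_le_zpowers {G : Type*} [Group G] [Finite G] {g : G} {H K : Subgroup G}
    (hH : H ≤ Subgroup.zpowers g) (hK : K ≤ Subgroup.zpowers g)
    (hcard : Nat.card H = Nat.card K) : H = K := by
  rw [eq_zpowers_pow_of_le_zpowers hH, eq_zpowers_pow_of_le_zpowers hK, hcard]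


variable {m : ℕ} [NeZero m]

lemma zpowers_sr_inj {i j : ZMod m}
    (h : zpowers (sr i) = zpowers (sr j)) : i = j := by
  have hj : sr j ∈ zpowers (sr i) := h ▸ Subgroup.mem_zpowers _
  rw [mem_zpowers_orderOf_two (orderOf_sr i)] at hj
  rcases hj with hj | hj
  · rw [one_def] at hj; exact absurd hj (by intro hc; cases hc)
  · exact (sr.injEq _ _ ▸ hj).symm

lemma exists_sr_of_not_le_rot {H : Subgroup (DihedralGroup m)} (hc : IsCyclic H)
    (hn : ¬ H ≤ zpowers (r 1)) : ∃ i, H = zpowers (sr i) := by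
  obtain ⟨⟨g, hg⟩, hgen⟩ := hc.exists_generator
  have hHg : H = zpowers g := by
    apply le_antisymm
    · intro x hx
      obtain ⟨z, hz⟩ := hgen ⟨x, hx⟩
      refine ⟨z, ?_⟩
      have := congrArg Subtype.val hz
      simpa [SubgroupClass.coe_zpow] using this
    · exact zpowers_le.mpr hg
  cases g with
  | r i =>
    exact absurd (hHg ▸ zpowers_le.mpr
      ⟨(i.val : ℤ), by
        show (r 1 : DihedralGroup m) ^ (i.val : ℤ) = r i
        rw [zpow_natCast, r_one_pow, ZMod.natCast_zmod_val]⟩) hn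
  | sr i => exact ⟨i, hHg⟩

open Pointwise in
lemma sr_permute {i j : ZMod m} (hij : i ≠ j)
    (h : (zpowers (sr i) : Set (DihedralGroup m)) * (zpowers (sr j) : Set (DihedralGroup m))
       = (zpowers (sr j) : Set (DihedralGroup m)) * (zpowers (sr i) : Set (DihedralGroup m))) :
    (2 : ZMod m) * (j - i) = 0 := by
  have hmem : sr i * sr j ∈
      (zpowers (sr j) : Set (DihedralGroup m)) * (zpowers (sr i) : Set (DihedralGroup m)) := by
    rw [← h]
    exact Set.mul_mem_mul (Subgroup.mem_zpowers _) (Subgroup.mem_zpowers _)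
  rw [Set.mem_mul] at hmem
  obtain ⟨b, hb, a, ha, hba⟩ := hmem
  rw [SetLike.mem_coe, mem_zpowers_orderOf_two (orderOf_sr j)] at hb
  rw [SetLike.mem_coe, mem_zpowers_orderOf_two (orderOf_sr i)] at ha
  rw [sr_mul_sr] at hba
  rcases hb with rfl | rfl <;> rcases ha with rfl | rfl
  · rw [one_mul, one_def] at hba
    exact absurd ((r.injEq _ _ ▸ hba)).symm (by
      intro hc; exact hij (by rwa [sub_eq_zero, eq_comm] at hc))
  · rw [one_mul] at hba; exact absurd hba (by simp)
  · rw [mul_one] at hba; exact absurd hba (by simp)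
  · rw [sr_mul_sr] at hba
    have : i - j = j - i := r.injEq _ _ ▸ hba
    linear_combination -this

lemma two_mul_eq_zero_zmod {k : ℕ} (hk : 1 ≤ k) {z : ZMod (2^k)} (h : 2 * z = 0) :
    z = 0 ∨ z = ((2^(k-1) : ℕ) : ZMod (2^k)) := by
  haveI : NeZero (2^k) := ⟨(pow_pos (two_pos : (0:ℕ) < 2) k).ne'⟩
  have hdvd : (2^k : ℕ) ∣ 2 * z.val := by
    rw [← ZMod.natCast_eq_zero_iff]
    push_cast [ZMod.natCast_zmod_val]
    exact h
  obtain ⟨c, hc⟩ := hdvd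
  have hlt : z.val < 2^k := ZMod.val_lt z
  have hc2 : c < 2 := by nlinarith [pow_pos (show (0:ℕ) < 2 by norm_num) k]
  have hc01 : c = 0 ∨ c = 1 := by omega
  rcases hc01 with rfl | rfl
  · left
    have : z.val = 0 := by omega
    rw [← ZMod.natCast_zmod_val z, this, Nat.cast_zero]
  · right
    have h2 : 2 * z.val = 2 * 2^(k-1) := by
      rw [hc, mul_one]
      rw [← pow_succ']
      congr 1
      omega
    have : z.val = 2^(k-1) := by omega
    rw [← ZMod.natCast_zmod_val z, this]


lemma csd_dihedral_le {k : ℕ} (hk : 1 ≤ k) :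
    csd (DihedralGroup (2^k)) ≤ (2*k+4 : ℚ) / 2^k := by
  classical
  haveI : NeZero (2^k) := ⟨(pow_pos (two_pos : (0:ℕ) < 2) k).ne'⟩
  set R : Subgroup (DihedralGroup (2^k)) := Subgroup.zpowers (r 1) with hR
  have hcardR : Nat.card R = 2^k := by rw [hR, Nat.card_zpowers, orderOf_r_one]
  have key : ∀ H : Subgroup (DihedralGroup (2^k)), H ≤ R →
      Nat.card ↥H = 2 ^ Nat.log 2 (Nat.card ↥H) ∧ Nat.log 2 (Nat.card ↥H) < k + 1 := by
    intro H hle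
    have hdvd : Nat.card ↥H ∣ 2^k := by
      have := Subgroup.card_dvd_of_le hle
      rwa [hcardR] at this
    obtain ⟨e, he, hee⟩ := (Nat.dvd_prime_pow Nat.prime_two).mp hdvd
    rw [hee, Nat.log_pow one_lt_two]
    exact ⟨rfl, Nat.lt_succ_of_le he⟩
  -- the denominator bound
  have hden : 2^k ≤ Nat.card {H : Subgroup (DihedralGroup (2^k)) // IsCyclic ↥H} := by
    have hinj : Function.Injective (fun i : ZMod (2^k) =>
        (⟨Subgroup.zpowers (sr i), _root_.isCyclic_zpowers _⟩ :
          {H : Subgroup (DihedralGroup (2^k)) // IsCyclic ↥H})) := by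
      intro i j hij
      exact zpowers_sr_inj (congrArg Subtype.val hij)
    calc 2^k = Nat.card (ZMod (2^k)) := by rw [Nat.card_zmod]
      _ ≤ _ := Nat.card_le_card_of_injective _ hinj
  -- the numerator bound
  have hnum : Nat.card {pr : Subgroup (DihedralGroup (2^k)) × Subgroup (DihedralGroup (2^k)) //
      IsCyclic ↥pr.1 ∧ IsCyclic ↥pr.2 ∧
      (pr.1 : Set (DihedralGroup (2^k))) * (pr.2 : Set (DihedralGroup (2^k)))
        = (pr.2 : Set (DihedralGroup (2^k))) * (pr.1 : Set (DihedralGroup (2^k)))}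
      ≤ (2*k+4) * Nat.card {H : Subgroup (DihedralGroup (2^k)) // IsCyclic ↥H} := by
    set Cyc := {H : Subgroup (DihedralGroup (2^k)) // IsCyclic ↥H} with hCyc
    let F : {pr : Subgroup (DihedralGroup (2^k)) × Subgroup (DihedralGroup (2^k)) //
      IsCyclic ↥pr.1 ∧ IsCyclic ↥pr.2 ∧
      (pr.1 : Set (DihedralGroup (2^k))) * (pr.2 : Set (DihedralGroup (2^k)))
        = (pr.2 : Set (DihedralGroup (2^k))) * (pr.1 : Set (DihedralGroup (2^k)))}
        → ((Fin (k+1) ⊕ Fin (k+1)) ⊕ Bool) × Cyc := fun p =>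
      if h1 : p.1.1 ≤ R then
        (Sum.inl (Sum.inl ⟨Nat.log 2 (Nat.card ↥p.1.1), (key _ h1).2⟩), ⟨p.1.2, p.2.2.1⟩)
      else if h2 : p.1.2 ≤ R then
        (Sum.inl (Sum.inr ⟨Nat.log 2 (Nat.card ↥p.1.2), (key _ h2).2⟩), ⟨p.1.1, p.2.1⟩)
      else
        (Sum.inr (decide (p.1.1 = p.1.2)), ⟨p.1.1, p.2.1⟩)
    have hF : Function.Injective F := by
      intro p q hpq
      simp only [F] at hpq
      by_cases h1p : p.1.1 ≤ R <;> by_cases h1q : q.1.1 ≤ R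
      · rw [dif_pos h1p, dif_pos h1q] at hpq
        simp only [Prod.mk.injEq, Sum.inl.injEq, Fin.mk.injEq, Subtype.mk.injEq] at hpq
        obtain ⟨hlog, h2eq⟩ := hpq
        replace h2eq := congrArg Subtype.val h2eq
        have hcards : Nat.card ↥p.1.1 = Nat.card ↥q.1.1 := by
          rw [(key _ h1p).1, (key _ h1q).1, hlog]
        exact Subtype.ext (Prod.ext (subgroup_eq_of_le_zpowers h1p h1q hcards) h2eq)
      · rw [dif_pos h1p, dif_neg h1q] at hpq
        by_cases h2q : q.1.2 ≤ R
        · rw [dif_pos h2q] at hpq; simp at hpq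
        · rw [dif_neg h2q] at hpq; simp at hpq
      · rw [dif_neg h1p, dif_pos h1q] at hpq
        by_cases h2p : p.1.2 ≤ R
        · rw [dif_pos h2p] at hpq; simp at hpq
        · rw [dif_neg h2p] at hpq; simp at hpq
      · rw [dif_neg h1p, dif_neg h1q] at hpq
        by_cases h2p : p.1.2 ≤ R <;> by_cases h2q : q.1.2 ≤ R
        · rw [dif_pos h2p, dif_pos h2q] at hpq
          simp only [Prod.mk.injEq, Sum.inl.injEq, Sum.inr.injEq, Fin.mk.injEq,
            Subtype.mk.injEq] at hpq
          obtain ⟨hlog, h1eq⟩ := hpq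
          replace h1eq := congrArg Subtype.val h1eq
          have hcards : Nat.card ↥p.1.2 = Nat.card ↥q.1.2 := by
            rw [(key _ h2p).1, (key _ h2q).1, hlog]
          exact Subtype.ext (Prod.ext h1eq (subgroup_eq_of_le_zpowers h2p h2q hcards))
        · rw [dif_pos h2p, dif_neg h2q] at hpq; simp at hpq
        · rw [dif_neg h2p, dif_pos h2q] at hpq; simp at hpq
        · rw [dif_neg h2p, dif_neg h2q] at hpq
          simp only [Prod.mk.injEq, Sum.inr.injEq, decide_eq_decide, Subtype.mk.injEq] at hpq
          obtain ⟨hbool, h1eq⟩ := hpq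
          replace h1eq : p.1.1 = q.1.1 := congrArg Subtype.val h1eq
          by_cases heqp : p.1.1 = p.1.2
          · have heqq : q.1.1 = q.1.2 := hbool.mp heqp
            refine Subtype.ext (Prod.ext h1eq ?_)
            rw [← heqp, ← heqq, h1eq]
          · have heqq : q.1.1 ≠ q.1.2 := fun hh => heqp (hbool.mpr hh)
            obtain ⟨i, hi⟩ := exists_sr_of_not_le_rot p.2.1 h1p
            obtain ⟨j, hj⟩ := exists_sr_of_not_le_rot p.2.2.1 h2p
            obtain ⟨j', hj'⟩ := exists_sr_of_not_le_rot q.2.2.1 h2q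
            have hqi : q.1.1 = zpowers (sr i) := h1eq ▸ hi
            have hij : i ≠ j := fun hh => heqp (by rw [hi, hj, hh])
            have hij' : i ≠ j' := fun hh => heqq (by rw [hqi, hj', hh])
            have hperm := p.2.2.2
            rw [hi, hj] at hperm
            have hperm' := q.2.2.2
            rw [hqi, hj'] at hperm'
            have h2z := sr_permute hij hperm
            have h2z' := sr_permute hij' hperm'
            have hcase := (two_mul_eq_zero_zmod hk h2z).resolve_left
              (fun hh => hij (sub_eq_zero.mp hh).symm)
            have hcase' := (two_mul_eq_zero_zmod hk h2z').resolve_left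
              (fun hh => hij' (sub_eq_zero.mp hh).symm)
            have hjj : j = j' := by
              have h' : j - i = j' - i := hcase.trans hcase'.symm
              linear_combination h'
            refine Subtype.ext (Prod.ext h1eq ?_)
            rw [hj, hj', hjj]
    calc Nat.card _ ≤ Nat.card ((((Fin (k+1) ⊕ Fin (k+1)) ⊕ Bool)) × Cyc) :=
          Nat.card_le_card_of_injective F hF
      _ = (2*k+4) * Nat.card Cyc := by
          rw [Nat.card_prod]
          congr 1
          simp [Nat.card_eq_fintype_card]
          omega
  -- combine
  unfold csd
  have hC0 : (0:ℚ) < (Nat.card {H : Subgroup (DihedralGroup (2^k)) // IsCyclic ↥H} : ℚ) := by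
    have : (0:ℕ) < 2^k := pow_pos two_pos k
    exact_mod_cast lt_of_lt_of_le this hden
  have h1 : (Nat.card {pr : Subgroup (DihedralGroup (2^k)) × Subgroup (DihedralGroup (2^k)) //
      IsCyclic ↥pr.1 ∧ IsCyclic ↥pr.2 ∧
      (pr.1 : Set (DihedralGroup (2^k))) * (pr.2 : Set (DihedralGroup (2^k)))
        = (pr.2 : Set (DihedralGroup (2^k))) * (pr.1 : Set (DihedralGroup (2^k)))} : ℚ)
      ≤ (2*k+4) * (Nat.card {H : Subgroup (DihedralGroup (2^k)) // IsCyclic ↥H} : ℚ) := by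
    exact_mod_cast hnum
  set C : ℚ := (Nat.card {H : Subgroup (DihedralGroup (2^k)) // IsCyclic ↥H} : ℚ) with hCdef
  calc _ ≤ ((2*k+4) * C) / C^2 := by gcongr
    _ = (2*k+4) / C := by
        field_simp
    _ ≤ (2*k+4 : ℚ) / 2^k := by
        refine div_le_div_of_nonneg_left (by positivity) (by positivity) ?_
        rw [hCdef]; exact_mod_cast hden


lemma csd_nonneg (G : Type*) [Group G] : 0 ≤ csd G :=
  div_nonneg (Nat.cast_nonneg _) (by positivity)

theorem stmt_10 :
    Filter.Tendsto (fun n : ℕ => (csd (DihedralGroup (2 ^ (n - 1))) : ℝ))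
      Filter.atTop (nhds 0) := by
  have hg : Filter.Tendsto (fun j : ℕ => ((2 * (j:ℝ) + 4) / 2 ^ j))
      Filter.atTop (nhds 0) := by
    have h1 := tendsto_pow_const_mul_const_pow_of_lt_one 1
      (by norm_num : (0:ℝ) ≤ 1/2) (by norm_num : (1/2:ℝ) < 1)
    have h0 := tendsto_pow_const_mul_const_pow_of_lt_one 0
      (by norm_num : (0:ℝ) ≤ 1/2) (by norm_num : (1/2:ℝ) < 1)
    have h := (h1.const_mul (2:ℝ)).add (h0.const_mul (4:ℝ))
    simp only [mul_zero, add_zero] at h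
    refine h.congr (fun j => ?_)
    rw [div_pow, one_pow, pow_zero, pow_one]
    field_simp
  have hcomp : Filter.Tendsto
      (fun n : ℕ => ((2 * ((n-1 : ℕ):ℝ) + 4) / 2 ^ (n-1)))
      Filter.atTop (nhds 0) := hg.comp (Filter.tendsto_sub_atTop_nat 1)
  apply tendsto_of_tendsto_of_tendsto_of_le_of_le' tendsto_const_nhds hcomp
  · filter_upwards with n
    have h := csd_nonneg (DihedralGroup (2 ^ (n - 1)))
    exact_mod_cast h
  · filter_upwards [Filter.eventually_ge_atTop 2] with n hn
    have hk : 1 ≤ n - 1 := by omega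
    have h := csd_dihedral_le hk
    calc (csd (DihedralGroup (2 ^ (n-1))) : ℝ)
        ≤ (((2 * ((n-1:ℕ):ℚ) + 4) / 2 ^ (n-1) : ℚ) : ℝ) := by exact_mod_cast h
      _ = (2 * ((n-1:ℕ):ℝ) + 4) / 2 ^ (n-1) := by push_cast; ring
end

section
/- For every integer n ≥ 3, the generalized quaternion group Q_{2^n} = ⟨x, y | x^{2^{n−1}} = y⁴ = 1, yxy⁻¹ = x^{2^{n−1}−1}⟩ of order 2^n satisfies csd(Q_{2^n}) = (n² + (n+1)·2^{n−1}) / (n + 2^{n−2})². In particular, csd(Q₁₆) = 7/8. -/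
open Pointwise

open Subgroup QuaternionGroup

namespace CsdAux

variable {m : ℕ}

/-- general lemma: zpowers of a power equals zpowers of the gcd power -/
lemma zpowers_pow_gcd {G : Type*} [Group G] (g : G) (t : ℕ) :
    zpowers (g ^ t) = zpowers (g ^ (Nat.gcd t (orderOf g))) := by
  set N := orderOf g
  apply le_antisymm <;> rw [zpowers_le]
  · obtain ⟨c, hc⟩ := Nat.gcd_dvd_left t N
    refine ⟨(c : ℤ), ?_⟩
    show (g ^ Nat.gcd t N) ^ (c : ℤ) = g ^ t
    rw [zpow_natCast, ← pow_mul, ← hc]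
  · have h1 : g ^ ((N : ℤ)) = 1 := by rw [zpow_natCast]; exact pow_orderOf_eq_one g
    have key : (g ^ t) ^ (Nat.gcdA t N) = g ^ (Nat.gcd t N) := by
      calc (g ^ t) ^ (Nat.gcdA t N) = g ^ ((t : ℤ) * Nat.gcdA t N) := by
            rw [← zpow_natCast g t, ← zpow_mul]
        _ = g ^ ((t : ℤ) * Nat.gcdA t N) * g ^ ((N : ℤ) * Nat.gcdB t N) := by
            rw [zpow_mul g (N : ℤ), h1, one_zpow, mul_one]
        _ = g ^ ((t : ℤ) * Nat.gcdA t N + (N : ℤ) * Nat.gcdB t N) := (zpow_add g _ _).symm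
        _ = g ^ ((Nat.gcd t N : ℤ)) := by rw [← Nat.gcd_eq_gcd_ab]
        _ = g ^ (Nat.gcd t N) := zpow_natCast g _
    exact ⟨Nat.gcdA t N, key⟩

lemma isCyclic_zpowers {G : Type*} [Group G] (g : G) : IsCyclic (zpowers g) := by
  refine ⟨⟨⟨g, mem_zpowers g⟩, fun x => ?_⟩⟩
  obtain ⟨z, hz⟩ := x.2
  exact ⟨z, Subtype.ext (by simpa using hz)⟩

lemma eq_zpowers_of_isCyclic {G : Type*} [Group G] (H : Subgroup G) (h : IsCyclic H) :
    ∃ g : G, H = zpowers g := by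
  obtain ⟨g, hg⟩ := h.exists_generator
  refine ⟨(g : G), le_antisymm (fun x hx => ?_) (zpowers_le.mpr g.2)⟩
  obtain ⟨z, hz⟩ := hg ⟨x, hx⟩
  exact ⟨z, by simpa using congrArg Subtype.val hz⟩

/-- inverse formulas -/
lemma a_inv (i : ZMod (2*m)) : (a i : QuaternionGroup m)⁻¹ = a (-i) := rfl
lemma xa_inv (i : ZMod (2*m)) : (xa i : QuaternionGroup m)⁻¹ = xa ((m : ZMod (2*m)) + i) := rfl

lemma hm2 : ((m : ZMod (2*m)) + m) = 0 := by
  have : ((2*m : ℕ) : ZMod (2*m)) = 0 := ZMod.natCast_self _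
  push_cast at this
  linear_combination this

/-- the subgroup of `a`-shaped elements -/
def aSub (m : ℕ) : Subgroup (QuaternionGroup m) where
  carrier := Set.range a
  one_mem' := ⟨0, rfl⟩
  mul_mem' := by rintro _ _ ⟨i, rfl⟩ ⟨j, rfl⟩; exact ⟨i + j, rfl⟩
  inv_mem' := by rintro _ ⟨i, rfl⟩; exact ⟨-i, rfl⟩

lemma zpowers_a_le_aSub (r : ZMod (2*m)) : zpowers (a r) ≤ aSub m :=
  zpowers_le.mpr ⟨r, rfl⟩

lemma xa_not_mem_zpowers_a (r u : ZMod (2*m)) : xa u ∉ zpowers (a r) := by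
  intro h
  obtain ⟨s, hs⟩ := zpowers_a_le_aSub r h
  cases hs

lemma normal_zpowers_a (r : ZMod (2*m)) : (zpowers (a r)).Normal := by
  constructor
  intro x hx g
  obtain ⟨z, hz⟩ := hx
  have key : g * a r * g⁻¹ ∈ zpowers (a r) := by
    rcases g with s | s
    · have : a s * a r * (a s)⁻¹ = a r := by
        rw [a_inv, a_mul_a, a_mul_a]; ring_nf
      rw [this]; exact mem_zpowers _
    · have : xa s * a r * (xa s)⁻¹ = a (-r) := by
        rw [xa_inv, xa_mul_a, xa_mul_xa]; congr 1
        have h := hm2 (m := m); linear_combination h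
      rw [this, ← a_inv]
      exact inv_mem (mem_zpowers _)
  have : g * x * g⁻¹ = (g * a r * g⁻¹) ^ z := by
    rw [← hz]; simp only [conj_zpow]
  rw [this]
  exact zpow_mem key z


section WithNeZero
variable [NeZero m]

lemma xa_pow_three (u : ZMod (2*m)) :
    (xa u : QuaternionGroup m) ^ 3 = xa (u + (m : ZMod (2*m))) := by
  have h3 : (xa u : QuaternionGroup m) ^ 3 = (xa u) ^ 2 * xa u := by
    rw [pow_succ]
  rw [h3, xa_sq, a_mul_xa]
  congr 1
  have h := hm2 (m := m); linear_combination -h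

lemma Bset (u : ZMod (2*m)) :
    ((zpowers (xa u) : Subgroup (QuaternionGroup m)) : Set (QuaternionGroup m)) =
      {1, a (m : ZMod (2*m)), xa u, xa (u + (m : ZMod (2*m)))} := by
  ext x
  constructor
  · rintro ⟨z, rfl⟩
    show (xa u) ^ z ∈ _
    rw [← zpow_mod_orderOf, orderOf_xa]
    have h0 : (0:ℤ) ≤ z % ((4:ℕ):ℤ) := Int.emod_nonneg z (by norm_num)
    have h4 : z % ((4:ℕ):ℤ) < 4 := by
      have := Int.emod_lt_of_pos z (show (0:ℤ) < ((4:ℕ):ℤ) by norm_num)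
      simpa using this
    have hcase : z % ((4:ℕ):ℤ) = 0 ∨ z % ((4:ℕ):ℤ) = 1 ∨ z % ((4:ℕ):ℤ) = 2 ∨
        z % ((4:ℕ):ℤ) = 3 := by omega
    rcases hcase with hc | hc | hc | hc <;> rw [hc]
    · rw [zpow_zero]; simp
    · rw [zpow_one]; simp
    · rw [show ((2:ℤ)) = ((2:ℕ):ℤ) from rfl, zpow_natCast, xa_sq]; simp
    · rw [show ((3:ℤ)) = ((3:ℕ):ℤ) from rfl, zpow_natCast, xa_pow_three]; simp
  · intro hx
    rcases hx with rfl | rfl | rfl | rfl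
    · exact one_mem _
    · refine ⟨((2:ℕ):ℤ), ?_⟩
      show (xa u) ^ ((2:ℕ):ℤ) = _
      rw [zpow_natCast, xa_sq]
    · exact mem_zpowers _
    · refine ⟨((3:ℕ):ℤ), ?_⟩
      show (xa u) ^ ((3:ℕ):ℤ) = _
      rw [zpow_natCast, xa_pow_three]

lemma BB (u v : ZMod (2*m)) :
    ((zpowers (xa u) : Subgroup (QuaternionGroup m)) : Set (QuaternionGroup m)) *
      ((zpowers (xa v) : Subgroup (QuaternionGroup m)) : Set (QuaternionGroup m)) =
      {1, a (m : ZMod (2*m)), a ((m : ZMod (2*m)) + v - u), a (v - u),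
        xa u, xa (u + (m : ZMod (2*m))), xa v, xa (v + (m : ZMod (2*m)))} := by
  rw [Bset, Bset]
  have h := hm2 (m := m)
  have m1 : ∀ w : ZMod (2*m), (1 : QuaternionGroup m) = a w → w = 0 := by
    intro w hw; rw [one_def] at hw; exact (a.inj hw).symm
  ext x
  simp only [Set.mem_insert_iff, Set.mem_singleton_iff, Set.mem_mul]
  constructor
  · rintro ⟨s, hs, t, ht, rfl⟩
    rcases hs with rfl | rfl | rfl | rfl <;> rcases ht with rfl | rfl | rfl | rfl
    · left; rw [one_mul]
    · right; left; rw [one_mul]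
    · right; right; right; right; right; right; left; rw [one_mul]
    · right; right; right; right; right; right; right; rw [one_mul]
    · right; left; rw [mul_one]
    · left; rw [a_mul_a, one_def]; exact congrArg a (by linear_combination h)
    · right; right; right; right; right; right; right
      rw [a_mul_xa]; exact congrArg xa (by linear_combination -h)
    · right; right; right; right; right; right; left
      rw [a_mul_xa]; exact congrArg xa (by ring_nf)
    · right; right; right; right; left; rw [mul_one]
    · right; right; right; right; right; left; rw [xa_mul_a]
    · right; right; left; rw [xa_mul_xa]
    · right; right; right; left
      rw [xa_mul_xa]; exact congrArg a (by linear_combination h)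
    · right; right; right; right; right; left; rw [mul_one]
    · right; right; right; right; left
      rw [xa_mul_a]; exact congrArg xa (by linear_combination h)
    · right; right; right; left
      rw [xa_mul_xa]; exact congrArg a (by linear_combination (0:ZMod (2*m)) = 0)
    · right; right; left
      rw [xa_mul_xa]; exact congrArg a (by ring)
  · intro hx
    rcases hx with rfl | rfl | rfl | rfl | rfl | rfl | rfl | rfl
    · exact ⟨1, Or.inl rfl, 1, Or.inl rfl, by rw [one_mul]⟩
    · exact ⟨a (m : ZMod (2*m)), by tauto, 1, Or.inl rfl, by rw [mul_one]⟩
    · exact ⟨xa u, by tauto, xa v, by tauto, by rw [xa_mul_xa]⟩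
    · refine ⟨xa (u + (m : ZMod (2*m))), by tauto, xa v, by tauto, ?_⟩
      rw [xa_mul_xa]; exact congrArg a (by linear_combination (0:ZMod (2*m)) = 0)
    · exact ⟨xa u, by tauto, 1, Or.inl rfl, by rw [mul_one]⟩
    · exact ⟨xa (u + (m : ZMod (2*m))), by tauto, 1, Or.inl rfl, by rw [mul_one]⟩
    · exact ⟨1, Or.inl rfl, xa v, by tauto, by rw [one_mul]⟩
    · exact ⟨1, Or.inl rfl, xa (v + (m : ZMod (2*m))), by tauto, by rw [one_mul]⟩


lemma zpowers_xa_add_m (w : ZMod (2*m)) :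
    zpowers (xa (w + (m : ZMod (2*m))) : QuaternionGroup m) = zpowers (xa w) := by
  have h := hm2 (m := m)
  apply le_antisymm <;> rw [zpowers_le]
  · have : (xa w : QuaternionGroup m) ^ 3 = xa (w + (m : ZMod (2*m))) := xa_pow_three w
    exact this ▸ Subgroup.pow_mem _ (mem_zpowers _) 3
  · have : (xa (w + (m : ZMod (2*m))) : QuaternionGroup m) ^ 3 = xa w := by
      rw [xa_pow_three]
      exact congrArg xa (by linear_combination h)
    exact this ▸ Subgroup.pow_mem _ (mem_zpowers _) 3

/-- the canonical projection -/
def pr (m : ℕ) : ZMod (2*m) →+* ZMod m := ZMod.castHom (dvd_mul_left m 2) (ZMod m)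

lemma xa_comm_iff (i i' : ZMod m) :
    ((zpowers (xa ((i.val : ℕ) : ZMod (2*m))) : Subgroup (QuaternionGroup m)) : 
        Set (QuaternionGroup m)) *
      (zpowers (xa ((i'.val : ℕ) : ZMod (2*m))) : Subgroup (QuaternionGroup m)) =
    ((zpowers (xa ((i'.val : ℕ) : ZMod (2*m))) : Subgroup (QuaternionGroup m)) : 
        Set (QuaternionGroup m)) *
      (zpowers (xa ((i.val : ℕ) : ZMod (2*m))) : Subgroup (QuaternionGroup m)) ↔
    2 * (i' - i) = 0 := by
  set u : ZMod (2*m) := ((i.val : ℕ) : ZMod (2*m)) with hu_def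
  set v : ZMod (2*m) := ((i'.val : ℕ) : ZMod (2*m)) with hv_def
  have h := hm2 (m := m)
  have hu : pr m u = i := by
    rw [hu_def]; rw [map_natCast]; exact ZMod.natCast_zmod_val i
  have hv : pr m v = i' := by
    rw [hv_def]; rw [map_natCast]; exact ZMod.natCast_zmod_val i'
  have hm0 : pr m ((m : ℕ) : ZMod (2*m)) = 0 := by
    rw [map_natCast]; exact ZMod.natCast_self m
  constructor
  · intro heq
    by_contra hne
    have hmem : a (u - v) ∈
        ((zpowers (xa u) : Subgroup (QuaternionGroup m)) : Set (QuaternionGroup m)) *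
          (zpowers (xa v) : Subgroup (QuaternionGroup m)) := by
      rw [heq, BB]
      right; right; right; left; rfl
    rw [BB] at hmem
    rcases hmem with h1 | h1 | h1 | h1 | h1 | h1 | h1 | h1
    · rw [one_def] at h1
      have := congrArg (pr m) (a.inj h1)
      simp only [map_sub, map_add, map_zero, hu, hv, hm0] at this
      exact hne (by linear_combination -2 * this)
    · have := congrArg (pr m) (a.inj h1)
      simp only [map_sub, map_add, map_zero, hu, hv, hm0] at this
      exact hne (by linear_combination -2 * this)
    · have := congrArg (pr m) (a.inj h1)
      simp only [map_sub, map_add, map_zero, hu, hv, hm0] at this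
      exact hne (by linear_combination -this)
    · have := congrArg (pr m) (a.inj h1)
      simp only [map_sub, map_add, map_zero, hu, hv, hm0] at this
      exact hne (by linear_combination -this)
    · cases h1
    · cases h1
    · cases h1
    · rw [Set.mem_singleton_iff] at h1; cases h1
  · intro h0
    have hdvd : (m : ℤ) ∣ 2 * ((i'.val : ℤ) - (i.val : ℤ)) := by
      rw [← ZMod.intCast_zmod_eq_zero_iff_dvd]
      push_cast
      rw [ZMod.natCast_zmod_val, ZMod.natCast_zmod_val]
      exact_mod_cast h0
    obtain ⟨s, hs⟩ := hdvd
    have key : 2 * (v - u) = 0 ∨ 2 * (v - u) = ((m : ℕ) : ZMod (2*m)) := by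
      have hvu : v - u = (((i'.val : ℤ) - (i.val : ℤ) : ℤ) : ZMod (2*m)) := by
        rw [hu_def, hv_def]; push_cast; ring
      rcases Int.even_or_odd s with ⟨q, hq⟩ | ⟨q, hq⟩
      · left
        calc 2 * (v - u) = ((2 * ((i'.val : ℤ) - (i.val : ℤ)) : ℤ) : ZMod (2*m)) := by
              rw [hvu]; push_cast; ring
          _ = 0 := by
              rw [hs, hq, ZMod.intCast_zmod_eq_zero_iff_dvd]
              exact ⟨q, by push_cast; ring⟩
      · right
        calc 2 * (v - u) = ((2 * ((i'.val : ℤ) - (i.val : ℤ)) : ℤ) : ZMod (2*m)) := by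
              rw [hvu]; push_cast; ring
          _ = ((m : ℕ) : ZMod (2*m)) + (((2 * m * q : ℤ)) : ZMod (2*m)) := by
              rw [hs, hq]; push_cast; ring
          _ = ((m : ℕ) : ZMod (2*m)) := by
              rw [show (((2 * m * q : ℤ)) : ZMod (2*m)) = 0 from
                (ZMod.intCast_zmod_eq_zero_iff_dvd _ _).mpr ⟨q, by push_cast; ring⟩]
              ring
    rcases key with hA | hB
    · have e1 : (m : ZMod (2*m)) + u - v = (m : ZMod (2*m)) + v - u := by linear_combination -hA
      have e2 : u - v = v - u := by linear_combination -hA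
      rw [BB, BB, e1, e2]
      ext x
      simp only [Set.mem_insert_iff, Set.mem_singleton_iff]
      tauto
    · have e1 : (m : ZMod (2*m)) + u - v = v - u := by linear_combination -hB
      have e2 : u - v = (m : ZMod (2*m)) + v - u := by linear_combination -hB - h
      rw [BB, BB, e1, e2]
      ext x
      simp only [Set.mem_insert_iff, Set.mem_singleton_iff]
      tauto

end WithNeZero

section Pow2
variable (k : ℕ)

instance instNZ : NeZero (2^(k+1)) := ⟨pow_ne_zero _ two_ne_zero⟩

abbrev QG (k : ℕ) := QuaternionGroup (2^(k+1))
abbrev Idx (k : ℕ) := Fin (k+3) ⊕ ZMod (2^(k+1))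

def phi : Idx k → Subgroup (QG k)
  | .inl j => zpowers (a ((2^(j : ℕ) : ℕ) : ZMod (2 * 2^(k+1))))
  | .inr i => zpowers (xa ((i.val : ℕ) : ZMod (2 * 2^(k+1))))

lemma phi_cyclic (x : Idx k) : IsCyclic (phi k x) := by
  cases x <;> exact isCyclic_zpowers _

lemma two_mul_pow : 2 * 2^(k+1) = 2^(k+2) := by ring

lemma card_phi_inl (j : Fin (k+3)) : Nat.card (phi k (.inl j)) = 2^(k+2-(j:ℕ)) := by
  show Nat.card (zpowers _) = _
  rw [Nat.card_zpowers, orderOf_a, ZMod.val_natCast]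
  have h1 : Nat.gcd (2 * 2^(k+1)) (2^(j:ℕ) % (2 * 2^(k+1))) =
      Nat.gcd (2 * 2^(k+1)) (2^(j:ℕ)) := by
    rw [Nat.gcd_comm, ← Nat.gcd_rec]
  rw [h1, two_mul_pow]
  have hj : (j : ℕ) ≤ k + 2 := by omega
  rw [Nat.gcd_eq_right (pow_dvd_pow 2 hj), Nat.pow_div hj zero_lt_two]

lemma phi_inj : Function.Injective (phi k) := by
  rintro (j | i) (j' | i') h
  · have hc := congrArg (fun H : Subgroup (QG k) => Nat.card H) h
    rw [card_phi_inl, card_phi_inl] at hc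
    have := Nat.pow_right_injective (le_refl 2) hc
    have hj : (j : ℕ) ≤ k + 2 := by omega
    have hj' : (j' : ℕ) ≤ k + 2 := by omega
    exact congrArg Sum.inl (Fin.ext (by omega))
  · exfalso
    have hmem : xa ((i'.val : ℕ) : ZMod (2 * 2^(k+1))) ∈ phi k (.inl j) := by
      rw [h]; exact mem_zpowers _
    exact xa_not_mem_zpowers_a _ _ hmem
  · exfalso
    have hmem : xa ((i.val : ℕ) : ZMod (2 * 2^(k+1))) ∈ phi k (.inl j') := by
      rw [← h]; exact mem_zpowers _
    exact xa_not_mem_zpowers_a _ _ hmem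
  · congr 1
    have hmem : xa ((i'.val : ℕ) : ZMod (2 * 2^(k+1))) ∈ phi k (.inr i) := by
      rw [h]; exact mem_zpowers _
    have hset : xa ((i'.val : ℕ) : ZMod (2 * 2^(k+1))) ∈
        ((zpowers (xa ((i.val : ℕ) : ZMod (2 * 2^(k+1)))) : Subgroup (QG k)) :
          Set (QG k)) := hmem
    rw [Bset] at hset
    have hvi : i.val < 2^(k+1) := ZMod.val_lt i
    have hvi' : i'.val < 2^(k+1) := ZMod.val_lt i'
    have hlt : i.val < 2 * 2^(k+1) := by omega
    have hlt' : i'.val < 2 * 2^(k+1) := by omega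
    rcases hset with h1 | h1 | h1 | h1
    · rw [one_def] at h1; cases h1
    · exact absurd h1 (by simp)
    · have := xa.inj h1
      have hval : i'.val = i.val := by
        have := congrArg ZMod.val this
        rwa [ZMod.val_cast_of_lt hlt, ZMod.val_cast_of_lt hlt'] at this
      exact (ZMod.val_injective _ hval).symm
    · exfalso
      have h2 : ((i'.val : ℕ) : ZMod (2 * 2^(k+1))) = ((i.val + 2^(k+1) : ℕ) : ZMod (2 * 2^(k+1))) := by
        rw [xa.inj h1]; push_cast; ring
      have := congrArg ZMod.val h2
      rw [ZMod.val_cast_of_lt hlt', ZMod.val_cast_of_lt (by omega)] at this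
      omega

lemma phi_surj (H : Subgroup (QG k)) (hH : IsCyclic H) : ∃ x : Idx k, phi k x = H := by
  obtain ⟨g, rfl⟩ := eq_zpowers_of_isCyclic H hH
  rcases g with r | r
  · have hr : a r = (a 1 : QG k) ^ (r.val) := by
      rw [a_one_pow, ZMod.natCast_zmod_val]
    have hgc := zpowers_pow_gcd (a 1 : QG k) r.val
    rw [orderOf_a_one] at hgc
    set d := Nat.gcd r.val (2 * 2^(k+1)) with hd
    have hdvd : d ∣ 2^(k+2) := by rw [← two_mul_pow]; exact Nat.gcd_dvd_right _ _
    obtain ⟨j, hj, hjeq⟩ := (Nat.dvd_prime_pow Nat.prime_two).mp hdvd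
    refine ⟨.inl ⟨j, by omega⟩, ?_⟩
    show zpowers (a ((2^j : ℕ) : ZMod (2 * 2^(k+1)))) = _
    calc zpowers (a ((2^j : ℕ) : ZMod (2 * 2^(k+1))))
        = zpowers ((a 1 : QG k) ^ (2^j)) := by rw [a_one_pow]
      _ = zpowers ((a 1 : QG k) ^ d) := by rw [hjeq]
      _ = zpowers ((a 1 : QG k) ^ r.val) := hgc.symm
      _ = zpowers (a r) := by rw [← hr]
  · refine ⟨.inr ((r.val : ℕ) : ZMod (2^(k+1))), ?_⟩
    show zpowers (xa ((ZMod.val ((r.val : ℕ) : ZMod (2^(k+1))) : ℕ) : ZMod (2 * 2^(k+1)))) = _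
    rw [ZMod.val_natCast]
    have hrv : r.val < 2 * 2^(k+1) := ZMod.val_lt r
    rcases Nat.lt_or_ge r.val (2^(k+1)) with hlt | hge
    · rw [Nat.mod_eq_of_lt hlt]
      congr 1
      exact congrArg xa (ZMod.natCast_zmod_val r)
    · have hmod : r.val % 2^(k+1) = r.val - 2^(k+1) := by
        rw [Nat.mod_eq_sub_mod hge, Nat.mod_eq_of_lt (by omega)]
      have hr : (r : ZMod (2 * 2^(k+1))) =
          ((r.val % 2^(k+1) : ℕ) : ZMod (2 * 2^(k+1))) + ((2^(k+1) : ℕ) : ZMod (2 * 2^(k+1))) := by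
        rw [hmod, ← Nat.cast_add, show r.val - 2^(k+1) + 2^(k+1) = r.val by omega,
          ZMod.natCast_zmod_val]
      rw [show (xa r : QG k) = xa (((r.val % 2^(k+1) : ℕ) : ZMod (2 * 2^(k+1))) +
        ((2^(k+1) : ℕ) : ZMod (2 * 2^(k+1)))) from congrArg xa hr]
      exact (zpowers_xa_add_m _).symm


def Rp : Idx k → Idx k → Prop := fun x y =>
  x.elim (fun _ => True) (fun i => y.elim (fun _ => True) (fun i' => 2 * (i' - i) = 0))

instance RpDec : ∀ x y : Idx k, Decidable (Rp k x y) := fun x y => by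
  rcases x with j | i
  · exact isTrue trivial
  · rcases y with j' | i'
    · exact isTrue trivial
    · exact inferInstanceAs (Decidable (2 * (i' - i) = 0))

lemma main_iff (x y : Idx k) :
    ((phi k x : Set (QG k)) * (phi k y : Set (QG k)) =
      (phi k y : Set (QG k)) * (phi k x : Set (QG k))) ↔ Rp k x y := by
  rcases x with j | i
  · refine ⟨fun _ => trivial, fun _ => ?_⟩
    haveI : (phi k (.inl j)).Normal := normal_zpowers_a _
    exact (Subgroup.set_mul_normal_comm _ _).symm
  · rcases y with j' | i'
    · refine ⟨fun _ => trivial, fun _ => ?_⟩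
      haveI : (phi k (.inl j')).Normal := normal_zpowers_a _
      exact Subgroup.set_mul_normal_comm _ _
    · exact xa_comm_iff i i'

lemma card_den : Nat.card {H : Subgroup (QG k) // IsCyclic H} = (k+3) + 2^(k+1) := by
  have e : Idx k ≃ {H : Subgroup (QG k) // IsCyclic H} :=
    Equiv.ofBijective (fun x => ⟨phi k x, phi_cyclic k x⟩)
      ⟨fun x y hxy => phi_inj k (congrArg Subtype.val hxy),
       fun H => (phi_surj k H.1 H.2).imp fun x hx => Subtype.ext hx⟩
  rw [← Nat.card_congr e, Nat.card_eq_fintype_card, Fintype.card_sum, Fintype.card_fin, ZMod.card]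

lemma card_tor (i : ZMod (2^(k+1))) :
    Fintype.card {i' : ZMod (2^(k+1)) // 2 * (i' - i) = 0} = 2 := by
  have e : {i' : ZMod (2^(k+1)) // 2 * (i' - i) = 0} ≃ {e : ZMod (2^(k+1)) // 2 * e = 0} :=
    (Equiv.subRight i).subtypeEquiv (fun a => by simp [Equiv.subRight])
  rw [Fintype.card_congr e, ← Nat.card_eq_fintype_card]
  rw [Nat.card_eq_two_iff]
  have hb : (2 : ZMod (2^(k+1))) * ((2^k : ℕ) : ZMod (2^(k+1))) = 0 := by
    rw [show (2 : ZMod (2^(k+1))) * ((2^k : ℕ) : ZMod (2^(k+1))) =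
      ((2^(k+1) : ℕ) : ZMod (2^(k+1))) by push_cast; ring, ZMod.natCast_self]
  refine ⟨⟨0, by rw [mul_zero]⟩, ⟨((2^k : ℕ) : ZMod (2^(k+1))), hb⟩, ?_, ?_⟩
  · intro hcon
    have h0 : (0 : ZMod (2^(k+1))) = ((2^k : ℕ) : ZMod (2^(k+1))) :=
      congrArg Subtype.val hcon
    have := (ZMod.natCast_eq_zero_iff _ _).mp h0.symm
    have hle := Nat.le_of_dvd (by positivity) this
    have : (2:ℕ)^k < 2^(k+1) := Nat.pow_lt_pow_right one_lt_two (by omega)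
    omega
  · rw [Set.eq_univ_iff_forall]
    rintro ⟨e, he⟩
    have hcast : ((2 * e.val : ℕ) : ZMod (2^(k+1))) = 0 := by
      push_cast
      rw [ZMod.natCast_zmod_val]
      exact he
    have hdvd : 2^(k+1) ∣ 2 * e.val := (ZMod.natCast_eq_zero_iff _ _).mp hcast
    obtain ⟨c, hc⟩ := hdvd
    have hev : e.val = 2^k * c := by
      have h2 : 2 * e.val = 2 * (2^k * c) := by rw [hc]; ring
      exact Nat.eq_of_mul_eq_mul_left (by norm_num) h2
    have hlt : e.val < 2^(k+1) := ZMod.val_lt e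
    have hc2 : c < 2 := by
      by_contra hcge
      have : 2^k * 2 ≤ 2^k * c := Nat.mul_le_mul_left _ (by omega)
      have h3 : (2:ℕ)^(k+1) = 2^k * 2 := by ring
      omega
    simp only [Set.mem_insert_iff, Set.mem_singleton_iff]
    interval_cases c
    · left
      apply Subtype.ext
      show e = 0
      have : e.val = 0 := by omega
      have h4 := ZMod.natCast_zmod_val e
      rw [← h4, this]; exact Nat.cast_zero
    · right
      apply Subtype.ext
      show e = ((2^k : ℕ) : ZMod (2^(k+1)))
      have h4 := ZMod.natCast_zmod_val e
      rw [← h4, hev, mul_one]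

lemma card_pairs : Nat.card {p : Idx k × Idx k // Rp k p.1 p.2} =
    (k+3) * ((k+3) + 2^(k+1)) + 2^(k+1) * ((k+3) + 2) := by
  rw [Nat.card_congr (Equiv.subtypeProdEquivSigmaSubtype (Rp k)), Nat.card_eq_fintype_card,
    Fintype.card_sigma, Fintype.sum_sum_type]
  have h1 : ∀ j : Fin (k+3), Fintype.card {y : Idx k // Rp k (.inl j) y} = (k+3) + 2^(k+1) := by
    intro j
    have eU : {y : Idx k // Rp k (.inl j) y} ≃ Idx k :=
      Equiv.subtypeUnivEquiv (fun _ => trivial)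
    rw [Fintype.card_congr eU, Fintype.card_sum, Fintype.card_fin, ZMod.card]
  have h2 : ∀ i : ZMod (2^(k+1)),
      Fintype.card {y : Idx k // Rp k (.inr i) y} = (k+3) + 2 := by
    intro i
    have eS : {y : Idx k // Rp k (.inr i) y} ≃
        (Fin (k+3) ⊕ {i' : ZMod (2^(k+1)) // 2 * (i' - i) = 0}) :=
      { toFun := fun z => match z with
          | ⟨.inl j, _⟩ => .inl j
          | ⟨.inr i', h⟩ => .inr ⟨i', h⟩
        invFun := fun z => match z with
          | .inl j => ⟨.inl j, trivial⟩
          | .inr p => ⟨.inr p.1, p.2⟩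
        left_inv := by rintro ⟨y | y, h⟩ <;> rfl
        right_inv := by rintro (j | p) <;> rfl }
    rw [Fintype.card_congr eS, Fintype.card_sum, Fintype.card_fin, card_tor]
  simp only [h1, h2]
  rw [Finset.sum_const, Finset.sum_const, Finset.card_univ, Finset.card_univ,
    Fintype.card_fin, ZMod.card, smul_eq_mul, smul_eq_mul]

lemma card_num : Nat.card {pr : Subgroup (QG k) × Subgroup (QG k) //
      IsCyclic ↥pr.1 ∧ IsCyclic ↥pr.2 ∧
      (pr.1 : Set (QG k)) * (pr.2 : Set (QG k)) = (pr.2 : Set (QG k)) * (pr.1 : Set (QG k))} =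
    (k+3) * ((k+3) + 2^(k+1)) + 2^(k+1) * ((k+3) + 2) := by
  rw [← card_pairs]
  apply Nat.card_congr
  refine Equiv.symm ?_
  apply Equiv.ofBijective (f := fun (p : {p : Idx k × Idx k // Rp k p.1 p.2}) =>
    (⟨(phi k p.1.1, phi k p.1.2),
      phi_cyclic k p.1.1, phi_cyclic k p.1.2, (main_iff k p.1.1 p.1.2).mpr p.2⟩ :
      {pr : Subgroup (QG k) × Subgroup (QG k) //
        IsCyclic ↥pr.1 ∧ IsCyclic ↥pr.2 ∧
        (pr.1 : Set (QG k)) * (pr.2 : Set (QG k)) = (pr.2 : Set (QG k)) * (pr.1 : Set (QG k))}))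
  constructor
  · rintro ⟨⟨x1, x2⟩, hx⟩ ⟨⟨y1, y2⟩, hy⟩ hxy
    have h1 := congrArg (fun z => z.val.1) hxy
    have h2 := congrArg (fun z => z.val.2) hxy
    simp only at h1 h2
    have e1 := phi_inj k h1
    have e2 := phi_inj k h2
    apply Subtype.ext
    simp [e1, e2]
  · rintro ⟨⟨H, K⟩, h1, h2, h3⟩
    obtain ⟨x, hx⟩ := phi_surj k H h1
    obtain ⟨y, hy⟩ := phi_surj k K h2
    refine ⟨⟨(x, y), (main_iff k x y).mp (by rw [hx, hy]; exact h3)⟩, ?_⟩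
    apply Subtype.ext
    simp [hx, hy]

lemma csd_val : csd (QG k) =
    (((k:ℚ)+3)^2 + ((k:ℚ)+4) * 2^(k+2)) / (((k:ℚ)+3) + 2^(k+1))^2 := by
  unfold csd
  rw [card_num, card_den]
  push_cast
  congr 1
  ring

end Pow2

end CsdAux

theorem stmt_11 (n : ℕ) (hn : 3 ≤ n) :
    csd (QuaternionGroup (2 ^ (n - 2))) =
      ((n : ℚ) ^ 2 + ((n : ℚ) + 1) * 2 ^ (n - 1)) / ((n : ℚ) + 2 ^ (n - 2)) ^ 2 ∧
    csd (QuaternionGroup 4) = 7 / 8 := by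
  obtain ⟨K, rfl⟩ : ∃ K, n = K + 3 := ⟨n - 3, by omega⟩
  constructor
  · have h := CsdAux.csd_val K
    have hA : K + 3 - 2 = K + 1 := by omega
    have hB : K + 3 - 1 = K + 2 := by omega
    rw [hA, hB]
    rw [show csd (QuaternionGroup (2 ^ (K+1))) =
      (((K:ℚ)+3)^2 + ((K:ℚ)+4) * 2^(K+2)) / (((K:ℚ)+3) + 2^(K+1))^2 from h]
    push_cast
    ring_nf
  · have h := CsdAux.csd_val 1
    have h4 : csd (QuaternionGroup 4) =
        (((1:ℚ)+3)^2 + ((1:ℚ)+4) * 2^(1+2)) / (((1:ℚ)+3) + 2^(1+1))^2 := h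
    rw [h4]
    norm_num
end
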